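/- (Corollary 1) If an MA-STRIPS problem Π has an optimal solution P = (a_1, ..., a_k), then Π has an optimal solution P' = (a'_1, ..., a'_k) that satisfies the Corollary-1 restrictions. -/

import Mathlib

/-- A STRIPS action over a set of propositions `P`. -/
structure StripsAction (P : Type*) where
  pre : Set P
  add : Set P
  del : Set P

namespace StripsAction

variable {P : Type*}

/-- The variable set of an action: all propositions it mentions. -/
def varset (a : StripsAction P) : Set P := a.pre ∪ a.add ∪ a.del

/-- An action is applicable in state `s` iff its preconditions hold in `s`. -/
def Applicable (a : StripsAction P) (s : Set P) : Prop := a.pre ⊆ s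

/-- Applying an action to a state: `a(s) = (s \ del(a)) ∪ add(a)`. -/
def apply (a : StripsAction P) (s : Set P) : Set P := (s \ a.del) ∪ a.add

end StripsAction

/-- The state obtained by applying a sequence of actions in order. -/
def applySeq {P : Type*} : List (StripsAction P) → Set P → Set P
  | [], s => s
  | a :: rest, s => applySeq rest (a.apply s)

/-- A sequence of actions is a legal plan from `s` iff each action is applicable in the
state obtained by applying the previous ones in order. -/
def LegalPlan {P : Type*} : List (StripsAction P) → Set P → Prop
  | [], _ => True
  | a :: rest, s => a.Applicable s ∧ LegalPlan rest (a.apply s)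

/-- An MA-STRIPS problem: pairwise-disjoint finite action sets `A i` (one per agent),
an initial state and a goal. -/
structure MAProblem (P Ag : Type*) where
  A : Ag → Set (StripsAction P)
  disjoint : ∀ i j : Ag, i ≠ j → Disjoint (A i) (A j)
  finite : ∀ i : Ag, (A i).Finite
  I : Set P
  G : Set P

namespace MAProblem

variable {P Ag : Type*}

/-- Proposition `p` is private to agent `i` iff every action mentioning `p` belongs to
`A i`. -/
def PrivateProp (pb : MAProblem P Ag) (p : P) (i : Ag) : Prop :=
  ∀ j : Ag, ∀ a ∈ pb.A j, p ∈ a.varset → j = i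

/-- An action `a ∈ A i` is private iff every proposition it mentions is private to `i`. -/
def PrivateAction (pb : MAProblem P Ag) (a : StripsAction P) (i : Ag) : Prop :=
  a ∈ pb.A i ∧ ∀ p ∈ a.varset, pb.PrivateProp p i

/-- An action of the problem is public iff it is not private. -/
def PublicAction (pb : MAProblem P Ag) (a : StripsAction P) : Prop :=
  (∃ i, a ∈ pb.A i) ∧ ∀ i : Ag, ¬ pb.PrivateAction a i

end MAProblem

/-- The cost of a plan is the sum of the costs of its actions. -/
def planCost {P : Type*} (cost : StripsAction P → ℝ) (L : List (StripsAction P)) : ℝ :=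
  (L.map cost).sum

/-- The Corollary-1 restrictions on a plan: (1) all actions up to and including the first
public action belong to one agent; (2) for every pair of consecutive public actions
`a_i, a_j` (no public action strictly in between), all actions `a_l` with `i < l ≤ j`
belong to one agent. -/
def Restrictions {P Ag : Type*} (pb : MAProblem P Ag) (L : List (StripsAction P)) : Prop :=
  (∀ i : Fin L.length, pb.PublicAction (L.get i) →
      (∀ l : Fin L.length, l < i → ¬ pb.PublicAction (L.get l)) →
      ∃ ag : Ag, ∀ l : Fin L.length, l ≤ i → L.get l ∈ pb.A ag) ∧
  (∀ i j : Fin L.length, i < j →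
      pb.PublicAction (L.get i) → pb.PublicAction (L.get j) →
      (∀ l : Fin L.length, i < l → l < j → ¬ pb.PublicAction (L.get l)) →
      ∃ ag : Ag, ∀ l : Fin L.length, i < l → l ≤ j → L.get l ∈ pb.A ag)

/-- A solution of an MA-STRIPS problem: a legal plan from `I`, built from the agents'
actions, whose final state contains the goal. -/
def Solution {P Ag : Type*} (pb : MAProblem P Ag) (L : List (StripsAction P)) : Prop :=
  (∀ x ∈ L, ∃ k, x ∈ pb.A k) ∧ LegalPlan L pb.I ∧ pb.G ⊆ applySeq L pb.I

/-- A solution is optimal iff no solution has strictly smaller cost. -/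
def OptimalSolution {P Ag : Type*} (pb : MAProblem P Ag) (cost : StripsAction P → ℝ)
    (L : List (StripsAction P)) : Prop :=
  Solution pb L ∧ ∀ L' : List (StripsAction P), Solution pb L' →
    planCost cost L ≤ planCost cost L'

lemma mem_varset_of_pre {P : Type*} {a : StripsAction P} {p : P} (h : p ∈ a.pre) :
    p ∈ a.varset := Or.inl (Or.inl h)
lemma mem_varset_of_add {P : Type*} {a : StripsAction P} {p : P} (h : p ∈ a.add) :
    p ∈ a.varset := Or.inl (Or.inr h)
lemma mem_varset_of_del {P : Type*} {a : StripsAction P} {p : P} (h : p ∈ a.del) :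
    p ∈ a.varset := Or.inr h

section Comm
variable {P : Type*} {a b : StripsAction P}

lemma apply_comm (h : Disjoint a.varset b.varset) (s : Set P) :
    a.apply (b.apply s) = b.apply (a.apply s) := by
  have hd := Set.disjoint_left.mp h
  have h1 : ∀ p ∈ a.add, p ∉ b.del := fun p hp hq =>
    hd (mem_varset_of_add hp) (mem_varset_of_del hq)
  have h2 : ∀ p ∈ b.add, p ∉ a.del := fun p hp hq =>
    hd (mem_varset_of_del hq) (mem_varset_of_add hp)
  ext p
  simp only [StripsAction.apply, Set.mem_union, Set.mem_diff]
  by_cases hpa : p ∈ a.add <;> by_cases hpb : p ∈ b.add <;>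
    first
    | (have := h1 p hpa; tauto)
    | (have := h2 p hpb; tauto)
    | tauto

lemma appl_of_apply (h : Disjoint a.varset b.varset) {s : Set P}
    (ha : a.Applicable (b.apply s)) : a.Applicable s := by
  intro p hp
  have hpb : p ∉ b.add := fun hq => Set.disjoint_left.mp h
    (mem_varset_of_pre hp) (mem_varset_of_add hq)
  have := ha hp
  simp only [StripsAction.apply, Set.mem_union, Set.mem_diff] at this
  tauto

lemma appl_apply (h : Disjoint a.varset b.varset) {s : Set P}
    (ha : a.Applicable s) : a.Applicable (b.apply s) := by
  intro p hp
  have hpb : p ∉ b.del := fun hq => Set.disjoint_left.mp h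
    (mem_varset_of_pre hp) (mem_varset_of_del hq)
  have := ha hp
  simp only [StripsAction.apply, Set.mem_union, Set.mem_diff]
  tauto

end Comm


lemma applySeq_append {P : Type*} (X Y : List (StripsAction P)) (s : Set P) :
    applySeq (X ++ Y) s = applySeq Y (applySeq X s) := by
  induction X generalizing s with
  | nil => rfl
  | cons a X ih => simp [applySeq, ih]

lemma legal_append {P : Type*} (X Y : List (StripsAction P)) (s : Set P) :
    LegalPlan (X ++ Y) s ↔ LegalPlan X s ∧ LegalPlan Y (applySeq X s) := by
  induction X generalizing s with
  | nil => simp [LegalPlan, applySeq]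
  | cons a X ih => simp [LegalPlan, applySeq, ih, and_assoc]

lemma move_right {P : Type*} (x : StripsAction P) :
    ∀ (M : List (StripsAction P)) (R : List (StripsAction P)) (s : Set P),
    (∀ m ∈ M, Disjoint x.varset m.varset) →
    LegalPlan (x :: (M ++ R)) s →
    LegalPlan (M ++ x :: R) s ∧ applySeq (M ++ x :: R) s = applySeq (x :: (M ++ R)) s := by
  intro M
  induction M with
  | nil => intro R s _ h; exact ⟨h, rfl⟩
  | cons m M ih =>
    intro R s hd h
    obtain ⟨hx, hm, hrest⟩ := h
    have hdm := hd m (by simp)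
    have hm' : m.Applicable s := appl_of_apply (Disjoint.symm hdm) hm
    have hx' : x.Applicable (m.apply s) := appl_apply hdm hx
    have hc : x.apply (m.apply s) = m.apply (x.apply s) := apply_comm hdm s
    have ih' := ih R (m.apply s) (fun a ha => hd a (by simp [ha]))
      (by rw [LegalPlan]; exact ⟨hx', by rw [hc]; exact hrest⟩)
    refine ⟨⟨hm', ih'.1⟩, ?_⟩
    show applySeq (M ++ x :: R) (m.apply s) = applySeq (M ++ R) (m.apply (x.apply s))
    rw [ih'.2]
    show applySeq (M ++ R) (x.apply (m.apply s)) = _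
    rw [hc]

lemma partition_step {P : Type*} (p : StripsAction P → Prop) [DecidablePred p]
    (c : StripsAction P) (T : List (StripsAction P)) :
    ∀ (B : List (StripsAction P)) (s : Set P),
    (∀ x ∈ B, ¬ p x → (∀ y ∈ B, p y → Disjoint x.varset y.varset) ∧
        Disjoint x.varset c.varset) →
    LegalPlan (B ++ c :: T) s →
    LegalPlan (B.filter (fun a => decide (p a)) ++
        c :: (B.filter (fun a => !decide (p a)) ++ T)) s ∧
    applySeq (B.filter (fun a => decide (p a)) ++
        c :: (B.filter (fun a => !decide (p a)) ++ T)) s = applySeq (B ++ c :: T) s := by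
  intro B
  induction B with
  | nil => intro s _ h; exact ⟨h, rfl⟩
  | cons x B ih =>
    intro s hyp hleg
    obtain ⟨hxa, hrest⟩ := hleg
    have hyp' : ∀ y ∈ B, ¬ p y → (∀ z ∈ B, p z → Disjoint y.varset z.varset) ∧
        Disjoint y.varset c.varset := by
      intro y hy hny
      obtain ⟨h1, h2⟩ := hyp y (by simp [hy]) hny
      exact ⟨fun z hz hpz => h1 z (by simp [hz]) hpz, h2⟩
    have ih' := ih (x.apply s) hyp' hrest
    set F := B.filter (fun a => decide (p a)) with hF
    set G := B.filter (fun a => !decide (p a)) with hG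
    by_cases hx : p x
    · have e1 : (x :: B).filter (fun a => decide (p a)) = x :: F := by
        simp [List.filter_cons, hx, hF]
      have e2 : (x :: B).filter (fun a => !decide (p a)) = G := by
        simp [List.filter_cons, hx, hG]
      rw [e1, e2]
      exact ⟨⟨hxa, ih'.1⟩, ih'.2⟩
    · obtain ⟨hcom, hcomc⟩ := hyp x (by simp) hx
      have e1 : (x :: B).filter (fun a => decide (p a)) = F := by
        simp [List.filter_cons, hx, hF]
      have e2 : (x :: B).filter (fun a => !decide (p a)) = x :: G := by
        simp [List.filter_cons, hx, hG]
      rw [e1, e2]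
      have hassoc : (F ++ [c]) ++ (G ++ T) = F ++ c :: (G ++ T) := by simp
      have hmv := move_right x (F ++ [c]) (G ++ T) s
        (by
          intro m hm
          rcases List.mem_append.mp hm with hm | hm
          · rw [hF] at hm
            obtain ⟨hmB, hmp⟩ := List.mem_filter.mp hm
            exact hcom m (List.mem_cons_of_mem x hmB) (by simpa using hmp)
          · rw [List.mem_singleton.mp hm]; exact hcomc)
        (by
          refine ⟨hxa, ?_⟩
          rw [hassoc]
          exact ih'.1)
      have hassoc2 : (F ++ [c]) ++ x :: (G ++ T) = F ++ c :: (x :: G ++ T) := by simp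
      rw [hassoc2] at hmv
      refine ⟨hmv.1, ?_⟩
      have h3 : applySeq (x :: (F ++ [c] ++ (G ++ T))) s
          = applySeq (F ++ c :: (G ++ T)) (x.apply s) := by
        rw [hassoc]; simp [applySeq]
      calc applySeq (F ++ c :: (x :: G ++ T)) s
          = applySeq (x :: (F ++ [c] ++ (G ++ T))) s := hmv.2
        _ = applySeq (F ++ c :: (G ++ T)) (x.apply s) := h3
        _ = applySeq (B ++ c :: T) (x.apply s) := ih'.2
        _ = applySeq (x :: B ++ c :: T) s := rfl

lemma filter_append_perm'' {α : Type*} (f : α → Bool) :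
    ∀ l : List α, (l.filter f ++ l.filter (fun a => !f a)).Perm l := by
  intro l
  induction l with
  | nil => exact List.Perm.refl _
  | cons a l ih =>
    by_cases h : f a
    · simpa [List.filter_cons, h] using ih.cons a
    · simp only [List.filter_cons, h, Bool.not_false, if_neg, if_pos]
      simpa [h] using (List.perm_middle).trans (ih.cons a)

lemma get_append_left_mem {α : Type*} (X Y : List α) (l : Fin (X ++ Y).length)
    (h : l.val < X.length) : (X ++ Y).get l ∈ X := by
  rw [List.get_eq_getElem, List.getElem_append_left h]
  exact List.getElem_mem h

lemma get_append_mid {α : Type*} (X : List α) (c : α) (Y : List α)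
    (l : Fin (X ++ c :: Y).length) (h : l.val = X.length) : (X ++ c :: Y).get l = c := by
  rw [List.get_eq_getElem, List.getElem_append_right (le_of_eq h.symm)]
  simp [h]

lemma get_append_tail {α : Type*} (X : List α) (c : α) (Y : List α)
    (l : Fin (X ++ c :: Y).length) (h : X.length < l.val)
    (h2 : l.val - X.length - 1 < Y.length) :
    (X ++ c :: Y).get l = Y.get ⟨l.val - X.length - 1, h2⟩ := by
  rw [List.get_eq_getElem, List.getElem_append_right (by omega)]
  rw [List.getElem_cons]
  simp only [List.get_eq_getElem]
  rw [dif_neg (by omega)]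

lemma restrictions_of_no_public {P Ag : Type*} (pb : MAProblem P Ag)
    {L : List (StripsAction P)} (h : ∀ x ∈ L, ¬ pb.PublicAction x) :
    Restrictions pb L := by
  constructor
  · intro i hpub _
    exact absurd hpub (h _ (List.get_mem L i))
  · intro i j _ hpub _ _
    exact absurd hpub (h _ (List.get_mem L i))

lemma restrictions_cons {P Ag : Type*} (pb : MAProblem P Ag)
    (Bg : List (StripsAction P)) (pub : StripsAction P) (T' : List (StripsAction P))
    (ag : Ag)
    (hBg : ∀ x ∈ Bg, x ∈ pb.A ag ∧ ¬ pb.PublicAction x)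
    (hpub : pub ∈ pb.A ag) (hpubP : pb.PublicAction pub)
    (hT : Restrictions pb T') :
    Restrictions pb (Bg ++ pub :: T') := by
  have hlen : (Bg ++ pub :: T').length = Bg.length + T'.length + 1 := by
    simp; omega
  set n := Bg.length with hn
  constructor
  · -- first public
    intro i hpubi hfirst
    have hi : i.val = n := by
      rcases Nat.lt_trichotomy i.val n with h | h | h
      · exact absurd hpubi (hBg _ (get_append_left_mem Bg _ i h)).2
      · exact h
      · exfalso
        have hnlt : n < (Bg ++ pub :: T').length := by omega
        have := hfirst ⟨n, hnlt⟩ (Fin.lt_def.mpr (by simpa using h))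
        rw [get_append_mid Bg pub T' ⟨n, hnlt⟩ rfl] at this
        exact this hpubP
    refine ⟨ag, fun l hl => ?_⟩
    have hl' : l.val ≤ i.val := Fin.le_def.mp hl
    rcases Nat.lt_or_ge l.val n with h | h
    · exact (hBg _ (get_append_left_mem Bg _ l h)).1
    · have : l.val = n := by omega
      rw [get_append_mid Bg pub T' l this]
      exact hpub
  · -- consecutive publics
    intro i j hij hpubi hpubj hbetween
    have hij' : i.val < j.val := Fin.lt_def.mp hij
    have hjlen : j.val < n + T'.length + 1 := by omega
    have hjn : n < j.val := by
      rcases Nat.lt_trichotomy j.val n with h | h | h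
      · exact absurd hpubj (hBg _ (get_append_left_mem Bg _ j h)).2
      · exact absurd hpubi (hBg _ (get_append_left_mem Bg _ i (by omega))).2
      · exact h
    have hin : n ≤ i.val := by
      by_contra h
      push_neg at h
      have hnlt : n < (Bg ++ pub :: T').length := by omega
      have := hbetween ⟨n, hnlt⟩ (Fin.lt_def.mpr (by simpa using h))
        (Fin.lt_def.mpr (by simpa using hjn))
      rw [get_append_mid Bg pub T' ⟨n, hnlt⟩ rfl] at this
      exact this hpubP
    have hj2 : j.val - n - 1 < T'.length := by omega
    have hgetj : (Bg ++ pub :: T').get j = T'.get ⟨j.val - n - 1, hj2⟩ :=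
      get_append_tail Bg pub T' j hjn hj2
    rcases eq_or_lt_of_le hin with hin | hin
    · -- i.val = n : use condition (1) of T'
      obtain ⟨ag', hag'⟩ := hT.1 ⟨j.val - n - 1, hj2⟩ (hgetj ▸ hpubj)
        (by
          intro l' hl'
          have hl'2 : l'.val < j.val - n - 1 := Fin.lt_def.mp hl'
          have hllt : l'.val + n + 1 < (Bg ++ pub :: T').length := by omega
          have := hbetween ⟨l'.val + n + 1, hllt⟩
            (Fin.lt_def.mpr (by simp; omega)) (Fin.lt_def.mpr (by simp; omega))
          rw [get_append_tail Bg pub T' ⟨l'.val + n + 1, hllt⟩ (by simp; omega)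
            (by simp; omega)] at this
          simpa [Nat.add_sub_cancel, Fin.eta,
            show l'.val + n + 1 - n - 1 = l'.val from by omega,
            show l'.val + n + 1 - Bg.length - 1 = l'.val from by omega] using this)
      refine ⟨ag', fun l hli hlj => ?_⟩
      have hli' : i.val < l.val := Fin.lt_def.mp hli
      have hlj' : l.val ≤ j.val := Fin.le_def.mp hlj
      have hl2 : l.val - n - 1 < T'.length := by omega
      rw [get_append_tail Bg pub T' l (by omega) hl2]
      exact hag' ⟨l.val - n - 1, hl2⟩ (Fin.le_def.mpr (by simp; omega))
    · -- n < i.val : use condition (2) of T'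
      have hi2 : i.val - n - 1 < T'.length := by omega
      have hgeti : (Bg ++ pub :: T').get i = T'.get ⟨i.val - n - 1, hi2⟩ :=
        get_append_tail Bg pub T' i hin hi2
      obtain ⟨ag', hag'⟩ := hT.2 ⟨i.val - n - 1, hi2⟩ ⟨j.val - n - 1, hj2⟩
        (Fin.lt_def.mpr (by simp; omega)) (hgeti ▸ hpubi) (hgetj ▸ hpubj)
        (by
          intro l' h1 h2
          have h1' : i.val - n - 1 < l'.val := Fin.lt_def.mp h1
          have h2' : l'.val < j.val - n - 1 := Fin.lt_def.mp h2
          have hllt : l'.val + n + 1 < (Bg ++ pub :: T').length := by omega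
          have := hbetween ⟨l'.val + n + 1, hllt⟩
            (Fin.lt_def.mpr (by simp; omega)) (Fin.lt_def.mpr (by simp; omega))
          rw [get_append_tail Bg pub T' ⟨l'.val + n + 1, hllt⟩ (by simp; omega)
            (by simp; omega)] at this
          simpa [Fin.eta,
            show l'.val + n + 1 - n - 1 = l'.val from by omega,
            show l'.val + n + 1 - Bg.length - 1 = l'.val from by omega] using this)
      refine ⟨ag', fun l hli hlj => ?_⟩
      have hli' : i.val < l.val := Fin.lt_def.mp hli
      have hlj' : l.val ≤ j.val := Fin.le_def.mp hlj
      have hl2 : l.val - n - 1 < T'.length := by omega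
      rw [get_append_tail Bg pub T' l (by omega) hl2]
      exact hag' ⟨l.val - n - 1, hl2⟩ (Fin.lt_def.mpr (by simp; omega))
        (Fin.le_def.mpr (by simp; omega))

lemma private_disjoint {P Ag : Type*} (pb : MAProblem P Ag) {x y : StripsAction P}
    {i j : Ag} (hx : pb.PrivateAction x i) (hy : y ∈ pb.A j) (hij : j ≠ i) :
    Disjoint x.varset y.varset := by
  rw [Set.disjoint_left]
  intro p hpx hpy
  exact hij ((hx.2 p hpx) j y hy hpy)

lemma private_of_not_public {P Ag : Type*} (pb : MAProblem P Ag) {x : StripsAction P}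
    {k : Ag} (hk : x ∈ pb.A k) (h : ¬ pb.PublicAction x) :
    ∃ i, pb.PrivateAction x i := by
  rw [MAProblem.PublicAction, not_and_or] at h
  rcases h with h | h
  · exact absurd ⟨k, hk⟩ h
  · push_neg at h
    exact h

lemma dropWhile_head_not {α : Type*} (p : α → Bool) :
    ∀ (l : List α) {a : α} {as : List α}, l.dropWhile p = a :: as → ¬ p a = true := by
  intro l
  induction l with
  | nil => intro a as h; simp at h
  | cons x xs ih =>
    intro a as h
    by_cases hx : p x
    · rw [List.dropWhile_cons_of_pos hx] at h
      exact ih h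
    · rw [List.dropWhile_cons_of_neg hx] at h
      injection h with h1 h2
      subst h1
      exact hx

lemma main_reorder {P Ag : Type*} (pb : MAProblem P Ag) :
    ∀ (n : ℕ) (L : List (StripsAction P)), L.length ≤ n → ∀ s : Set P,
    LegalPlan L s → (∀ x ∈ L, ∃ k, x ∈ pb.A k) →
    ∃ L' : List (StripsAction P), L'.Perm L ∧ LegalPlan L' s ∧
      applySeq L' s = applySeq L s ∧ Restrictions pb L' := by
  intro n
  induction n with
  | zero =>
    intro L hL s hleg _
    have : L = [] := List.eq_nil_of_length_eq_zero (by omega)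
    subst this
    exact ⟨[], List.Perm.refl _, hleg, rfl, restrictions_of_no_public pb (by simp)⟩
  | succ n ih =>
    intro L hL s hleg hmem
    classical
    by_cases hpub : ∀ x ∈ L, ¬ pb.PublicAction x
    · exact ⟨L, List.Perm.refl _, hleg, rfl, restrictions_of_no_public pb hpub⟩
    · push_neg at hpub
      set q : StripsAction P → Bool := fun x => !decide (pb.PublicAction x) with hq
      have hLB : L.takeWhile q ++ L.dropWhile q = L :=
        List.takeWhile_append_dropWhile
      set B := L.takeWhile q with hB
      set D := L.dropWhile q with hD
      have hDne : D ≠ [] := by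
        intro hnil
        obtain ⟨x, hx, hpx⟩ := hpub
        rw [hnil, List.append_nil] at hLB
        have hxB : x ∈ B := by rw [hLB]; exact hx
        have := List.mem_takeWhile_imp (hB ▸ hxB)
        simp [hq] at this
        exact this hpx
      obtain ⟨pub, T, hDe⟩ := List.exists_cons_of_ne_nil hDne
      have hDL : L.dropWhile q = pub :: T := by rw [← hD]; exact hDe
      have hpubP : pb.PublicAction pub := by
        have hnot := dropWhile_head_not q L hDL
        simpa [hq] using hnot
      have hBpriv : ∀ x ∈ B, ¬ pb.PublicAction x := by
        intro x hx
        have := List.mem_takeWhile_imp (hB ▸ hx)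
        simpa [hq] using this
      have hBL : ∀ x ∈ B, x ∈ L := by
        intro x hx
        rw [← hLB]
        exact List.mem_append.mpr (Or.inl hx)
      have hTL : ∀ x ∈ T, x ∈ L := by
        intro x hx
        rw [← hLB]
        exact List.mem_append.mpr (Or.inr (by rw [hDe]; exact List.mem_cons_of_mem _ hx))
      obtain ⟨ag, hag⟩ := hpubP.1
      set p : StripsAction P → Prop := fun x => x ∈ pb.A ag with hp
      set F := B.filter (fun a => decide (p a)) with hF
      set G := B.filter (fun a => !decide (p a)) with hG
      have hcomm : ∀ x ∈ B, ¬ p x →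
          (∀ y ∈ B, p y → Disjoint x.varset y.varset) ∧ Disjoint x.varset pub.varset := by
        intro x hx hnpx
        obtain ⟨k, hk⟩ := hmem x (hBL x hx)
        obtain ⟨i, hpriv⟩ := private_of_not_public pb hk (hBpriv x hx)
        have hiag : ag ≠ i := by
          intro he
          apply hnpx
          show x ∈ pb.A ag
          rw [he]
          exact hpriv.1
        exact ⟨fun y _ hpy => private_disjoint pb hpriv hpy hiag,
          private_disjoint pb hpriv hag hiag⟩
      have hlegBD : LegalPlan (B ++ pub :: T) s := by
        rw [← hDe, hLB]
        exact hleg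
      have hpart := partition_step p pub T B s hcomm hlegBD
      have hsplit : F ++ pub :: (G ++ T) = (F ++ [pub]) ++ (G ++ T) := by simp
      have hlegpart := hpart.1
      rw [hsplit, legal_append] at hlegpart
      have hlenGT : (G ++ T).length ≤ n := by
        have h1 : G.length ≤ B.length := by rw [hG]; exact List.length_filter_le _ _
        have h2 : B.length + (T.length + 1) = L.length := by
          rw [← hLB, hDe]; simp
        simp only [List.length_append]
        omega
      obtain ⟨T', hTp, hTleg, hTapp, hTrest⟩ := ih (G ++ T) hlenGT
        (applySeq (F ++ [pub]) s) hlegpart.2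
        (by
          intro x hx
          rcases List.mem_append.mp hx with hx | hx
          · exact hmem x (hBL x (List.mem_of_mem_filter hx))
          · exact hmem x (hTL x hx))
      have hpermFG : (F ++ G).Perm B := by
        rw [hF, hG]
        exact filter_append_perm'' _ B
      have hperm : (F ++ pub :: T').Perm L := by
        have h1 : (F ++ pub :: T').Perm (pub :: (F ++ T')) := List.perm_middle
        have h2 : (pub :: (F ++ T')).Perm (pub :: (F ++ (G ++ T))) :=
          (List.Perm.append_left F hTp).cons pub
        have h3 : F ++ (G ++ T) = (F ++ G) ++ T := (List.append_assoc F G T).symm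
        have h4 : (pub :: ((F ++ G) ++ T)).Perm (pub :: (B ++ T)) :=
          (hpermFG.append_right T).cons pub
        have h5 : (pub :: (B ++ T)).Perm (B ++ pub :: T) := List.perm_middle.symm
        have h6 : B ++ pub :: T = L := by rw [← hDe, hLB]
        rw [← h6]
        exact h1.trans ((h3 ▸ h2).trans (h4.trans h5))
      refine ⟨F ++ pub :: T', hperm, ?_, ?_, ?_⟩
      · have : F ++ pub :: T' = (F ++ [pub]) ++ T' := by simp
        rw [this, legal_append]
        exact ⟨hlegpart.1, hTleg⟩
      · have e1 : F ++ pub :: T' = (F ++ [pub]) ++ T' := by simp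
        rw [e1, applySeq_append, hTapp, ← applySeq_append, ← hsplit, hpart.2,
          ← hDe, hLB]
      · refine restrictions_cons pb F pub T' ag ?_ hag hpubP hTrest
        intro x hx
        rw [hF] at hx
        obtain ⟨hxB, hxp⟩ := List.mem_filter.mp hx
        exact ⟨by simpa [hp] using hxp, hBpriv x hxB⟩

/-- Corollary 1: if an MA-STRIPS problem has an optimal solution
`P = (a_1, ..., a_k)`, then it has an optimal solution `P' = (a'_1, ..., a'_k)` (of the
same length) satisfying the Corollary-1 restrictions. -/
theorem exists_restricted_optimal_solution {P Ag : Type*} [Finite P] (pb : MAProblem P Ag)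
    (cost : StripsAction P → ℝ) (L : List (StripsAction P))
    (hopt : OptimalSolution pb cost L) :
    ∃ L' : List (StripsAction P), L'.length = L.length ∧
      OptimalSolution pb cost L' ∧ Restrictions pb L' := by
  obtain ⟨⟨hmem, hleg, hgoal⟩, hmin⟩ := hopt
  obtain ⟨L', hperm, hleg', happ', hrest⟩ :=
    main_reorder pb L.length L le_rfl pb.I hleg hmem
  have hcost : planCost cost L' = planCost cost L := (hperm.map cost).sum_eq
  have hsol : Solution pb L' :=
    ⟨fun x hx => hmem x (hperm.mem_iff.mp hx), hleg', by rw [happ']; exact hgoal⟩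
  exact ⟨L', hperm.length_eq, ⟨hsol, fun L'' hL'' => hcost ▸ hmin L'' hL''⟩, hrest⟩
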